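/- tan(4π/11) + 4·sin(π/11) = √11. -/

import Mathlib

theorem stmt2 : Real.tan (4*Real.pi/11) + 4*Real.sin (Real.pi/11) = Real.sqrt 11 := by
  have hpi := Real.pi_pos
  set θ : ℝ := Real.pi / 11 with hθ
  set c : ℝ := Real.cos θ with hcdef
  set s : ℝ := Real.sin θ with hsdef
  have hrec : ∀ a : ℝ, Real.cos (a + θ) = 2 * c * Real.cos a - Real.cos (a - θ) := by
    intro a
    have h1 := Real.cos_add a θ
    have h2 := Real.cos_sub a θ
    simp only [← hcdef, ← hsdef] at h1 h2
    linarith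
  have h2 : Real.cos (2*θ) = 2*c^2 - 1 := by
    rw [show (2:ℝ)*θ = θ + θ by ring, hrec, show θ - θ = (0:ℝ) by ring, Real.cos_zero]; ring
  have h3 : Real.cos (3*θ) = 4*c^3 - 3*c := by
    rw [show (3:ℝ)*θ = 2*θ + θ by ring, hrec, show (2:ℝ)*θ - θ = θ by ring, h2]; ring
  have h4 : Real.cos (4*θ) = 8*c^4 - 8*c^2 + 1 := by
    rw [show (4:ℝ)*θ = 3*θ + θ by ring, hrec, show (3:ℝ)*θ - θ = 2*θ by ring, h2, h3]; ring
  have h5 : Real.cos (5*θ) = 16*c^5 - 20*c^3 + 5*c := by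
    rw [show (5:ℝ)*θ = 4*θ + θ by ring, hrec, show (4:ℝ)*θ - θ = 3*θ by ring, h3, h4]; ring
  have h6 : Real.cos (6*θ) = 32*c^6 - 48*c^4 + 18*c^2 - 1 := by
    rw [show (6:ℝ)*θ = 5*θ + θ by ring, hrec, show (5:ℝ)*θ - θ = 4*θ by ring, h4, h5]; ring
  have h7 : Real.cos (7*θ) = 64*c^7 - 112*c^5 + 56*c^3 - 7*c := by
    rw [show (7:ℝ)*θ = 6*θ + θ by ring, hrec, show (6:ℝ)*θ - θ = 5*θ by ring, h5, h6]; ring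
  have h8 : Real.cos (8*θ) = 128*c^8 - 256*c^6 + 160*c^4 - 32*c^2 + 1 := by
    rw [show (8:ℝ)*θ = 7*θ + θ by ring, hrec, show (7:ℝ)*θ - θ = 6*θ by ring, h6, h7]; ring
  have h9 : Real.cos (9*θ) = 256*c^9 - 576*c^7 + 432*c^5 - 120*c^3 + 9*c := by
    rw [show (9:ℝ)*θ = 8*θ + θ by ring, hrec, show (8:ℝ)*θ - θ = 7*θ by ring, h7, h8]; ring
  have h10 : Real.cos (10*θ) = 512*c^10 - 1280*c^8 + 1120*c^6 - 400*c^4 + 50*c^2 - 1 := by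
    rw [show (10:ℝ)*θ = 9*θ + θ by ring, hrec, show (9:ℝ)*θ - θ = 8*θ by ring, h8, h9]; ring
  have h11 : Real.cos (11*θ) = 1024*c^11 - 2816*c^9 + 2816*c^7 - 1232*c^5 + 220*c^3 - 11*c := by
    rw [show (11:ℝ)*θ = 10*θ + θ by ring, hrec, show (10:ℝ)*θ - θ = 9*θ by ring, h9, h10]; ring
  have hπ : Real.cos (11*θ) = -1 := by
    rw [show (11:ℝ)*θ = Real.pi by rw [hθ]; ring, Real.cos_pi]
  have hkey : (c + 1) * (32*c^5 - 16*c^4 - 32*c^3 + 12*c^2 + 6*c - 1)^2 = 0 := by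
    rw [h11] at hπ; linarith [hπ, sq_nonneg c]
  have hc_pos : 0 < c := by
    rw [hcdef]
    apply Real.cos_pos_of_mem_Ioo
    rw [hθ]; constructor <;> linarith
  have hQ : 32*c^5 - 16*c^4 - 32*c^3 + 12*c^2 + 6*c - 1 = 0 := by
    have h0 : (32*c^5 - 16*c^4 - 32*c^3 + 12*c^2 + 6*c - 1)^2 = 0 := by
      rcases mul_eq_zero.mp hkey with h | h
      · linarith
      · exact h
    exact pow_eq_zero_iff (by norm_num) |>.mp h0
  have hs2 : s^2 = 1 - c^2 := by
    have := Real.sin_sq_add_cos_sq θ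
    simp only [← hcdef, ← hsdef] at this
    linarith
  have hsin2 : Real.sin (2*θ) = 2*s*c := by
    rw [Real.sin_two_mul]
  have hsin4 : Real.sin (4*θ) = 8*s*c^3 - 4*s*c := by
    rw [show (4:ℝ)*θ = 2*(2*θ) by ring, Real.sin_two_mul, hsin2, h2]; ring
  have hcos4pos : 0 < Real.cos (4*θ) := by
    apply Real.cos_pos_of_mem_Ioo
    rw [hθ]; constructor <;> linarith
  have hsin4pos : 0 < Real.sin (4*θ) := by
    apply Real.sin_pos_of_pos_of_lt_pi <;> rw [hθ] <;> linarith
  have hs_pos : 0 < s := by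
    rw [hsdef]; apply Real.sin_pos_of_pos_of_lt_pi <;> rw [hθ] <;> linarith
  have htan : Real.tan (4*Real.pi/11) = Real.sin (4*θ) / Real.cos (4*θ) := by
    rw [show 4*Real.pi/11 = 4*θ by rw [hθ]; ring, Real.tan_eq_sin_div_cos]
  have hpos : 0 < Real.tan (4*Real.pi/11) + 4*s := by
    rw [htan]
    have : 0 < Real.sin (4*θ) / Real.cos (4*θ) := div_pos hsin4pos hcos4pos
    linarith
  have hD : (8*c^4 - 8*c^2 + 1) ≠ 0 := by rw [← h4]; exact hcos4pos.ne'
  have hsq : (Real.tan (4*Real.pi/11) + 4*s)^2 = 11 := by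
    rw [htan, hsin4, h4]
    rw [div_add' _ _ _ hD, div_pow, div_eq_iff (pow_ne_zero 2 hD)]
    linear_combination (32*c^4 + 8*c^3 - 32*c^2 - 4*c + 4)^2 * hs2 + (-32*c^5 - 32*c^4 + 24*c^3 + 32*c^2 + 2*c - 5) * hQ
  conv_rhs => rw [← hsq, Real.sqrt_sq hpos.le]
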